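/- Let J be an m×m symmetric positive semidefinite matrix, b ∈ ℝ^m, λ ≥ 0, and d(w) = (1/2) wᵀ J w − wᵀ b + λ ∑_j |w_j|. If w₁ and w₂ are both global minimizers of d, then J w₁ = J w₂. -/

import Mathlib

open Matrix Finset

/-- Penalized score distance criterion d(w) = (1/2) wᵀ J w − wᵀ b + λ ∑ |w_j|. -/
noncomputable def pdist {m : ℕ} (J : Matrix (Fin m) (Fin m) ℝ) (b : Fin m → ℝ) (lam : ℝ)
    (w : Fin m → ℝ) : ℝ :=
  (1 / 2) * (w ⬝ᵥ J.mulVec w) - w ⬝ᵥ b + lam * ∑ j, |w j|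

theorem stmt14 {m : ℕ} (J : Matrix (Fin m) (Fin m) ℝ) (b : Fin m → ℝ) (lam : ℝ)
    (hJ : J.PosSemidef) (hlam : 0 ≤ lam) (w₁ w₂ : Fin m → ℝ)
    (h₁ : ∀ w, pdist J b lam w₁ ≤ pdist J b lam w)
    (h₂ : ∀ w, pdist J b lam w₂ ≤ pdist J b lam w) :
    J.mulVec w₁ = J.mulVec w₂ := by
  set u : Fin m → ℝ := w₁ - w₂ with hu
  set v : Fin m → ℝ := (1/2 : ℝ) • (w₁ + w₂) with hv
  -- symmetry of the bilinear form
  have hsym : ∀ x y : Fin m → ℝ, x ⬝ᵥ J.mulVec y = y ⬝ᵥ J.mulVec x := by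
    intro x y
    have hT : Jᵀ = J := by
      rw [← conjTranspose_eq_transpose_of_trivial]; exact hJ.1
    rw [dotProduct_mulVec, ← hT, vecMul_transpose, dotProduct_comm, hT]
  -- quadratic expansions
  have hq : v ⬝ᵥ J.mulVec v
      = (1/4) * (w₁ ⬝ᵥ J.mulVec w₁) + (1/2) * (w₁ ⬝ᵥ J.mulVec w₂)
        + (1/4) * (w₂ ⬝ᵥ J.mulVec w₂) := by
    simp only [hv, mulVec_smul, mulVec_add, dotProduct_smul, smul_dotProduct,
      add_dotProduct, dotProduct_add, smul_eq_mul]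
    rw [hsym w₂ w₁]; ring
  have hqu : u ⬝ᵥ J.mulVec u
      = (w₁ ⬝ᵥ J.mulVec w₁) - 2 * (w₁ ⬝ᵥ J.mulVec w₂) + (w₂ ⬝ᵥ J.mulVec w₂) := by
    simp only [hu, sub_eq_add_neg, mulVec_add, mulVec_neg, dotProduct_add, dotProduct_neg,
      add_dotProduct, neg_dotProduct, neg_neg]
    rw [hsym w₂ w₁]; ring
  -- linear term
  have hlin : v ⬝ᵥ b = (1/2) * (w₁ ⬝ᵥ b) + (1/2) * (w₂ ⬝ᵥ b) := by
    simp only [hv, smul_dotProduct, add_dotProduct, smul_eq_mul]; ring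
  -- abs term convexity
  have habs : ∑ j, |v j| ≤ (1/2) * ∑ j, |w₁ j| + (1/2) * ∑ j, |w₂ j| := by
    have : ∀ j, |v j| ≤ (1/2) * |w₁ j| + (1/2) * |w₂ j| := by
      intro j
      simp only [hv, Pi.smul_apply, Pi.add_apply, smul_eq_mul]
      calc |(1/2 : ℝ) * (w₁ j + w₂ j)| = (1/2) * |w₁ j + w₂ j| := by
            rw [abs_mul]; norm_num
        _ ≤ (1/2) * (|w₁ j| + |w₂ j|) := by
            have := abs_add_le (w₁ j) (w₂ j); linarith
        _ = (1/2) * |w₁ j| + (1/2) * |w₂ j| := by ring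
    calc ∑ j, |v j| ≤ ∑ j, ((1/2) * |w₁ j| + (1/2) * |w₂ j|) := Finset.sum_le_sum (fun j _ => this j)
      _ = (1/2) * ∑ j, |w₁ j| + (1/2) * ∑ j, |w₂ j| := by
          rw [Finset.sum_add_distrib, Finset.mul_sum, Finset.mul_sum]
  have hd1 : pdist J b lam w₁ ≤ pdist J b lam v := h₁ v
  have hd2 : pdist J b lam w₂ ≤ pdist J b lam v := h₂ v
  have hpen : lam * ∑ j, |v j| ≤ lam * ((1/2) * ∑ j, |w₁ j| + (1/2) * ∑ j, |w₂ j|) :=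
    mul_le_mul_of_nonneg_left habs hlam
  have huJu : u ⬝ᵥ J.mulVec u ≤ 0 := by
    simp only [pdist] at hd1 hd2
    nlinarith [hd1, hd2, hq, hqu, hlin, hpen]
  have h0 : u ⬝ᵥ J.mulVec u = 0 := le_antisymm huJu (by simpa using hJ.dotProduct_mulVec_nonneg u)
  have : J.mulVec u = 0 := by
    have := (hJ.dotProduct_mulVec_zero_iff u).mp (by simpa using h0)
    exact this
  have hfin : J.mulVec w₁ - J.mulVec w₂ = 0 := by
    rw [← mulVec_sub]; exact this
  exact sub_eq_zero.mp hfin
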